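/- Let G be a finite subgroup of SL(2, ℂ) with |G| ≥ 2, let V be the natural two-dimensional representation of G, and let S be a simple finite-dimensional complex representation of G. Then dim_ℂ Hom_G(S, (V ⊕ 𝟙) ⊗ S) = 1, where 𝟙 is the one-dimensional trivial representation. (Equivalently: in the McKay quiver of G embedded into SL(3, ℂ) via g ↦ diag(g, 1), there is exactly one loop at each vertex.) -/

import Mathlib

open CategoryTheory CategoryTheory.Limits CategoryTheory.MonoidalCategory Module

/-- The category `FDRep k G` has binary biproducts (direct sums), derived from its
binary products and preadditive structure. -/
instance FDRep.hasBinaryBiproducts (k G : Type) [Field k] [Monoid G] :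
    HasBinaryBiproducts (FDRep k G) :=
  HasBinaryBiproducts.of_hasBinaryProducts

/-- The natural two-dimensional complex representation of a subgroup `G` of `SL(2, ℂ)`,
acting on `ℂ² = Fin 2 → ℂ` by matrix multiplication. -/
noncomputable def SL2.natRep (G : Subgroup (Matrix.SpecialLinearGroup (Fin 2) ℂ)) :
    Representation ℂ G (Fin 2 → ℂ) :=
  LinearEquiv.automorphismGroup.toLinearMapMonoidHom.comp
    (Matrix.SpecialLinearGroup.toLin'.comp G.subtype)

/-- The natural representation of `G ⊆ SL(2, ℂ)` as an object of `FDRep ℂ G`. -/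
noncomputable def SL2.natV (G : Subgroup (Matrix.SpecialLinearGroup (Fin 2) ℂ)) :
    FDRep ℂ G :=
  FDRep.of (SL2.natRep G)

/-- Composing with the biproduct projections gives a linear equivalence
`(S ⟶ A ⊞ B) ≃ₗ (S ⟶ A) × (S ⟶ B)`. -/
noncomputable def homBiprodEquiv {G : Type} [Group G] (A B S : FDRep ℂ G) :
    (S ⟶ A ⊞ B) ≃ₗ[ℂ] (S ⟶ A) × (S ⟶ B) where
  toFun f := (f ≫ biprod.fst, f ≫ biprod.snd)
  map_add' f g := by simp [Preadditive.add_comp]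
  map_smul' c f := by simp [Linear.smul_comp]
  invFun p := biprod.lift p.1 p.2
  left_inv f := by apply biprod.hom_ext <;> simp
  right_inv p := by simp

variable {G : Subgroup (Matrix.SpecialLinearGroup (Fin 2) ℂ)} {S : FDRep ℂ G}

lemma sl2_eq_one_of_fixed {n : ℕ} (hn : n ≠ 0)
    (h : Matrix.SpecialLinearGroup (Fin 2) ℂ) (hpow : h ^ n = 1)
    (v : Fin 2 → ℂ) (hv : v ≠ 0) (hfix : (h : Matrix (Fin 2) (Fin 2) ℂ).mulVec v = v) :
    h = 1 := by
  set A : Matrix (Fin 2) (Fin 2) ℂ := (h : Matrix (Fin 2) (Fin 2) ℂ) with hA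
  have hdet : A 0 0 * A 1 1 - A 0 1 * A 1 0 = 1 := by
    rw [← Matrix.det_fin_two A]; exact h.property
  have hker : (A - 1).mulVec v = 0 := by
    rw [Matrix.sub_mulVec, Matrix.one_mulVec, hfix, sub_self]
  have hdet0 : (A 0 0 - 1) * (A 1 1 - 1) - A 0 1 * A 1 0 = 0 := by
    have : (A - 1).det = 0 := by
      rw [← Matrix.exists_mulVec_eq_zero_iff]
      exact ⟨v, hv, hker⟩
    rw [Matrix.det_fin_two] at this
    simpa using this
  have htr : A 0 0 + A 1 1 = 2 := by linear_combination hdet - hdet0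
  set N := A - 1 with hN
  have hN2 : N * N = 0 := by
    ext i j
    fin_cases i <;> fin_cases j <;>
      simp [hN, Matrix.mul_apply, Fin.sum_univ_two, Matrix.sub_apply, Matrix.one_apply]
    · linear_combination A 0 0 * htr - hdet
    · linear_combination A 0 1 * htr
    · linear_combination A 1 0 * htr
    · linear_combination A 1 1 * htr - hdet
  -- powers : A ^ k = 1 + k • N
  have hpowk : ∀ k : ℕ, A ^ k = 1 + (k : ℂ) • N := by
    intro k
    induction k with
    | zero => simp
    | succ k ih =>
      have hAN : A = 1 + N := by simp [hN]
      rw [pow_succ, ih, hAN]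
      push_cast
      rw [mul_add, add_mul, add_mul, one_mul, mul_one, Matrix.smul_mul, hN2]
      simp [add_smul]
      abel
  have hAn : A ^ n = 1 := by
    have : ((h ^ n : Matrix.SpecialLinearGroup (Fin 2) ℂ) : Matrix (Fin 2) (Fin 2) ℂ) = 1 := by
      rw [hpow]; rfl
    rwa [Matrix.SpecialLinearGroup.coe_pow] at this
  have hNzero : N = 0 := by
    have h1 : (1 : Matrix (Fin 2) (Fin 2) ℂ) + (n : ℂ) • N = 1 := by rw [← hpowk, hAn]
    have h2 : (n : ℂ) • N = 0 := by
      have := congrArg (fun X => X - 1) h1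
      simpa using this
    have hn' : (n : ℂ) ≠ 0 := Nat.cast_ne_zero.mpr hn
    simpa [hn'] using (smul_eq_zero.mp h2)
  apply Subtype.ext
  show A = 1
  have h3 : A - 1 = 0 := hN ▸ hNzero
  have := congrArg (fun X => X + 1) h3
  simpa using this

namespace McKayAux

/-- component extraction -/
noncomputable def F (S : FDRep ℂ G) (i : Fin 2) :
    TensorProduct ℂ (Fin 2 → ℂ) S →ₗ[ℂ] S :=
  TensorProduct.lift ((LinearMap.lsmul ℂ S).comp (LinearMap.proj i))

@[simp] lemma F_tmul (i : Fin 2) (x : Fin 2 → ℂ) (m : S) :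
    F S i (TensorProduct.tmul ℂ x m) = x i • m := rfl

lemma natV_ρ_apply (h : G) (x : Fin 2 → ℂ) :
    (SL2.natV G).ρ h x = ((h : Matrix.SpecialLinearGroup (Fin 2) ℂ) : Matrix (Fin 2) (Fin 2) ℂ).mulVec x := by
  rfl

noncomputable def f (T : S ⟶ SL2.natV G ⊗ S) (i : Fin 2) : S →ₗ[ℂ] S :=
  (F S i).comp (T.hom.hom.hom : (S : Type) →ₗ[ℂ] TensorProduct ℂ (Fin 2 → ℂ) S)

lemma covariance (T : S ⟶ SL2.natV G ⊗ S) (h : G) (i : Fin 2) (m : S) :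
    f T i (S.ρ h m) =
      ∑ j : Fin 2, ((h : Matrix.SpecialLinearGroup (Fin 2) ℂ) : Matrix (Fin 2) (Fin 2) ℂ) i j •
        S.ρ h (f T j m) := by
  have hcomm : T.hom.hom.hom (S.ρ h m) =
      (TensorProduct.map (SL2.natRep G h) (S.ρ h)) (T.hom.hom.hom m) := by
    have := T.comm h
    exact congrArg (fun φ => φ.hom.hom m) this
  have haux : ∀ z : TensorProduct ℂ (Fin 2 → ℂ) S,
      F S i ((TensorProduct.map (SL2.natRep G h) (S.ρ h)) z)
        = ∑ j : Fin 2, ((h : Matrix.SpecialLinearGroup (Fin 2) ℂ) : Matrix (Fin 2) (Fin 2) ℂ) i j •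
            S.ρ h (F S j z) := by
    intro z
    induction z using TensorProduct.induction_on with
    | zero => simp
    | add a b ha hb => simp only [map_add, ha, hb, Finset.sum_add_distrib, smul_add]
    | tmul x m' =>
      rw [TensorProduct.map_tmul, F_tmul, show SL2.natRep G h x = _ from natV_ρ_apply h x]
      have : (((h : Matrix.SpecialLinearGroup (Fin 2) ℂ) : Matrix (Fin 2) (Fin 2) ℂ).mulVec x) i
          = ∑ j : Fin 2, ((h : Matrix.SpecialLinearGroup (Fin 2) ℂ) : Matrix (Fin 2) (Fin 2) ℂ) i j * x j := by
        simp [Matrix.mulVec, dotProduct]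
      rw [this, Finset.sum_smul]
      congr 1
      funext j
      rw [F_tmul, mul_smul]
      rw [← map_smul]
  show F S i (T.hom.hom.hom (S.ρ h m)) = _
  rw [hcomm]
  exact haux _


lemma nontrivial_of_simple [Simple S] : Nontrivial (S : Type) := by
  rw [← not_subsingleton_iff_nontrivial]
  intro hsub
  apply id_nonzero S
  apply Action.hom_ext
  apply FGModuleCat.hom_ext
  apply LinearMap.ext
  intro m
  exact @Subsingleton.elim _ hsub _ _

lemma commute_f [Simple S] (T : S ⟶ SL2.natV G ⊗ S) :
    (f T 0) ∘ₗ (f T 1) = (f T 1) ∘ₗ (f T 0) := by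
  haveI := nontrivial_of_simple (S := S)
  set A : G → Matrix (Fin 2) (Fin 2) ℂ :=
    fun h => ((h : Matrix.SpecialLinearGroup (Fin 2) ℂ) : Matrix (Fin 2) (Fin 2) ℂ) with hA
  have cov : ∀ (h : G) (i : Fin 2) (m : S),
      f T i (S.ρ h m) = A h i 0 • S.ρ h (f T 0 m) + A h i 1 • S.ρ h (f T 1 m) := by
    intro h i m
    rw [covariance T h i m, Fin.sum_univ_two]
  have hc : ∀ (h : G) (m : S),
      f T 0 (f T 1 (S.ρ h m)) - f T 1 (f T 0 (S.ρ h m))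
        = S.ρ h (f T 0 (f T 1 m) - f T 1 (f T 0 m)) := by
    intro h m
    have hdet : A h 0 0 * A h 1 1 - A h 0 1 * A h 1 0 = 1 := by
      rw [← Matrix.det_fin_two]
      exact (h : Matrix.SpecialLinearGroup (Fin 2) ℂ).property
    rw [cov h 1 m, cov h 0 m]
    simp only [map_add, map_smul, cov]
    rw [map_sub]
    match_scalars
    all_goals first
      | linear_combination hdet
      | linear_combination -hdet
      | linear_combination 2*hdet
      | linear_combination -2*hdet
      | ring1
  let c : S →ₗ[ℂ] S := (f T 0) ∘ₗ (f T 1) - (f T 1) ∘ₗ (f T 0)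
  let cH : S ⟶ S := ⟨FGModuleCat.ofHom c, fun g => FGModuleCat.hom_ext (LinearMap.ext fun m => hc g m)⟩
  have hfr : finrank ℂ (S ⟶ S) = 1 := finrank_endomorphism_simple_eq_one ℂ S
  obtain ⟨μ, hμ⟩ := (finrank_eq_one_iff_of_nonzero' (𝟙 S) (id_nonzero S)).mp hfr cH
  have hhom : c = μ • LinearMap.id := by
    have := congrArg (fun x => x.hom.hom.hom) hμ
    exact this.symm
  have htr : LinearMap.trace ℂ S c = 0 := by
    simp only [c, map_sub]
    have : (f T 0) ∘ₗ (f T 1) = (f T 0) * (f T 1) := rfl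
    rw [this]
    have : (f T 1) ∘ₗ (f T 0) = (f T 1) * (f T 0) := rfl
    rw [this]
    rw [LinearMap.trace_mul_comm, sub_self]
  rw [hhom] at htr
  rw [map_smul, LinearMap.trace_id, smul_eq_mul] at htr
  have hd : (finrank ℂ (S : Type) : ℂ) ≠ 0 :=
    Nat.cast_ne_zero.mpr (finrank_pos (R := ℂ) (M := (S : Type))).ne'
  have hμ0 : μ = 0 := by
    rcases mul_eq_zero.mp htr with h | h
    · exact h
    · exact absurd h hd
  have : c = 0 := by rw [hhom, hμ0, zero_smul]
  have := sub_eq_zero.mp this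
  exact this

/-- A nonzero `G`-stable submodule of a simple `FDRep` is everything. -/
lemma stable_top [Simple S] (p : Submodule ℂ S)
    (hst : ∀ (h : G), ∀ m ∈ p, S.ρ h m ∈ p) (hp : p ≠ ⊥) : p = ⊤ := by
  classical
  let ρp : Representation ℂ G p :=
    { toFun := fun h => (S.ρ h).restrict (fun x hx => hst h x hx)
      map_one' := by ext x; simp
      map_mul' := fun g h => by ext x; simp }
  let X : FDRep ℂ G := FDRep.of ρp
  let ι : X ⟶ S := ⟨FGModuleCat.ofHom p.subtype, fun g => rfl⟩
  have hι : ι ≠ 0 := by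
    obtain ⟨x, hx, hx0⟩ := (Submodule.ne_bot_iff p).mp hp
    intro h0
    have : ι.hom ⟨x, hx⟩ = 0 := by rw [h0]; rfl
    exact hx0 this
  haveI : Mono ι := by
    constructor
    intro Z u v huv
    ext z
    have : ι.hom (u.hom z) = ι.hom (v.hom z) := by
      have h1 := congrArg (fun (w : Z ⟶ S) => w.hom z) huv
      simpa using h1
    exact this
  haveI : IsIso ι := isIso_of_mono_of_nonzero hι
  rw [Submodule.eq_top_iff']
  intro m
  have hcomp : (inv ι ≫ ι) = 𝟙 S := IsIso.inv_hom_id ι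
  have h2 : ι.hom ((inv ι).hom m) = m := by
    have h1 : (inv ι ≫ ι).hom m = Action.Hom.hom (𝟙 S) m := by rw [hcomp]
    exact h1
  rw [← h2]
  exact ((inv ι).hom m).property


lemma fix_eq_one [Finite G] (hG : 2 ≤ Nat.card G) (u : G) (v : Fin 2 → ℂ) (hv : v ≠ 0)
    (hfix : ((u : Matrix.SpecialLinearGroup (Fin 2) ℂ) : Matrix (Fin 2) (Fin 2) ℂ).mulVec v = v) :
    u = 1 := by
  have hn : Nat.card G ≠ 0 := by omega
  have h1 : u ^ Nat.card G = 1 := pow_card_eq_one'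
  have hpow : (u : Matrix.SpecialLinearGroup (Fin 2) ℂ) ^ Nat.card G = 1 := by
    rw [← SubmonoidClass.coe_pow, h1, OneMemClass.coe_one]
  have := sl2_eq_one_of_fixed hn (u : Matrix.SpecialLinearGroup (Fin 2) ℂ) hpow v hv hfix
  exact OneMemClass.coe_eq_one.mp this

lemma reconstruction (z : TensorProduct ℂ (Fin 2 → ℂ) S) :
    z = TensorProduct.tmul ℂ (Pi.single 0 1 : Fin 2 → ℂ) (F S 0 z)
        + TensorProduct.tmul ℂ (Pi.single 1 1 : Fin 2 → ℂ) (F S 1 z) := by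
  induction z using TensorProduct.induction_on with
  | zero => simp
  | add a b ha hb =>
    rw [map_add, map_add, TensorProduct.tmul_add, TensorProduct.tmul_add]
    calc a + b = (TensorProduct.tmul ℂ (Pi.single 0 1 : Fin 2 → ℂ) (F S 0 a)
        + TensorProduct.tmul ℂ (Pi.single 1 1 : Fin 2 → ℂ) (F S 1 a)) + (TensorProduct.tmul ℂ (Pi.single 0 1 : Fin 2 → ℂ) (F S 0 b)
        + TensorProduct.tmul ℂ (Pi.single 1 1 : Fin 2 → ℂ) (F S 1 b)) := by rw [← ha, ← hb]
      _ = _ := by abel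
  | tmul x m =>
    rw [F_tmul, F_tmul, TensorProduct.tmul_smul, TensorProduct.tmul_smul,
      TensorProduct.smul_tmul', TensorProduct.smul_tmul', ← TensorProduct.add_tmul]
    congr 1
    funext i
    fin_cases i <;> simp

lemma hom_eq_zero [Finite G] (hG : 2 ≤ Nat.card G) [Simple S]
    (T : S ⟶ SL2.natV G ⊗ S) : T = 0 := by
  classical
  by_contra hT
  haveI := nontrivial_of_simple (S := S)
  haveI := Fintype.ofFinite G
  set A : G → Matrix (Fin 2) (Fin 2) ℂ :=
    fun h => ((h : Matrix.SpecialLinearGroup (Fin 2) ℂ) : Matrix (Fin 2) (Fin 2) ℂ) with hA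
  have cov : ∀ (h : G) (i : Fin 2) (m : S),
      f T i (S.ρ h m) = A h i 0 • S.ρ h (f T 0 m) + A h i 1 • S.ρ h (f T 1 m) := by
    intro h i m
    rw [covariance T h i m, Fin.sum_univ_two]
  have hcomm := commute_f T
  -- a joint eigenvector
  obtain ⟨α, hα⟩ := Module.End.exists_eigenvalue (f T 0)
  set E := Module.End.eigenspace (f T 0) α with hEdef
  have hmap : ∀ x ∈ E, f T 1 x ∈ E := by
    intro x hx
    rw [hEdef, Module.End.mem_eigenspace_iff] at hx ⊢
    have : f T 0 (f T 1 x) = f T 1 (f T 0 x) := LinearMap.congr_fun hcomm x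
    rw [this, hx, map_smul]
  haveI : Nontrivial E := Submodule.nontrivial_iff_ne_bot.mpr hα
  obtain ⟨β, hβ⟩ := Module.End.exists_eigenvalue ((f T 1).restrict hmap)
  obtain ⟨s', hs'⟩ := hβ.exists_hasEigenvector
  set s : (S : Type) := (s' : S) with hsdef
  have hs : s ≠ 0 := fun h0 => hs'.right (Subtype.ext h0)
  have hf0 : f T 0 s = α • s := Module.End.mem_eigenspace_iff.mp s'.property
  have hf1 : f T 1 s = β • s := by
    have := hs'.apply_eq_smul
    have h2 := congrArg (Subtype.val) this
    simpa [LinearMap.restrict_apply] using h2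
  set v : Fin 2 → ℂ := ![α, β] with hvdef
  have hfv : ∀ i, f T i s = v i • s := by
    intro i
    fin_cases i
    · simpa [hvdef] using hf0
    · simpa [hvdef] using hf1
  by_cases hv : v = 0
  · -- kernel case
    set K := LinearMap.ker (f T 0) ⊓ LinearMap.ker (f T 1) with hKdef
    have hsK : s ∈ K := by
      rw [hKdef, Submodule.mem_inf, LinearMap.mem_ker, LinearMap.mem_ker]
      constructor
      · rw [hfv 0, hv]; simp
      · rw [hfv 1, hv]; simp
    have hstab : ∀ (h : G), ∀ m ∈ K, S.ρ h m ∈ K := by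
      intro h m hm
      rw [hKdef, Submodule.mem_inf, LinearMap.mem_ker, LinearMap.mem_ker] at hm ⊢
      obtain ⟨hm0, hm1⟩ := hm
      constructor
      · rw [cov h 0 m, hm0, hm1]; simp
      · rw [cov h 1 m, hm0, hm1]; simp
    have hK : K = ⊤ := stable_top K hstab (fun e => hs (by rw [e] at hsK; simpa using hsK))
    have hfz : ∀ (i : Fin 2) (m : S), f T i m = 0 := by
      intro i m
      have hm : m ∈ K := hK ▸ Submodule.mem_top
      rw [hKdef, Submodule.mem_inf, LinearMap.mem_ker, LinearMap.mem_ker] at hm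
      fin_cases i
      · exact hm.1
      · exact hm.2
    apply hT
    apply Action.hom_ext
    apply FGModuleCat.hom_ext
    apply LinearMap.ext
    intro m
    have := reconstruction (S := S) (T.hom m)
    have e0 : F S 0 (T.hom m) = 0 := hfz 0 m
    have e1 : F S 1 (T.hom m) = 0 := hfz 1 m
    rw [e0, e1] at this
    rw [TensorProduct.tmul_zero, TensorProduct.tmul_zero, add_zero] at this
    exact this
  · -- nonzero joint eigenvalue case
    set φ : G → (Fin 2 → ℂ) := fun h => (A h).mulVec v with hφdef
    have heig : ∀ (h : G) (i : Fin 2), f T i (S.ρ h s) = φ h i • S.ρ h s := by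
      intro h i
      rw [cov h i s, hfv 0, hfv 1, map_smul, map_smul]
      rw [smul_smul, smul_smul, ← add_smul]
      congr 1
      simp [hφdef, Matrix.mulVec, dotProduct, Fin.sum_univ_two, hvdef]
      fin_cases i <;> rfl
    have hcancel : ∀ (u : G) (x y : Fin 2 → ℂ), (A u).mulVec x = (A u).mulVec y → x = y := by
      intro u x y hxy
      have h1 : (A u⁻¹ * A u) = 1 := by
        rw [hA]
        have : ((u⁻¹ : G) : Matrix.SpecialLinearGroup (Fin 2) ℂ)
            * ((u : G) : Matrix.SpecialLinearGroup (Fin 2) ℂ) = 1 := by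
          rw [← Subgroup.coe_mul, inv_mul_cancel, Subgroup.coe_one]
        calc (((u⁻¹ : G) : Matrix.SpecialLinearGroup (Fin 2) ℂ) : Matrix (Fin 2) (Fin 2) ℂ)
            * (((u : G) : Matrix.SpecialLinearGroup (Fin 2) ℂ) : Matrix (Fin 2) (Fin 2) ℂ)
            = ((((u⁻¹ : G) : Matrix.SpecialLinearGroup (Fin 2) ℂ)
              * ((u : G) : Matrix.SpecialLinearGroup (Fin 2) ℂ) : Matrix.SpecialLinearGroup (Fin 2) ℂ) : Matrix (Fin 2) (Fin 2) ℂ) := by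
              rw [Matrix.SpecialLinearGroup.coe_mul]
          _ = 1 := by rw [this]; rfl
      have := congrArg ((A u⁻¹).mulVec) hxy
      rwa [Matrix.mulVec_mulVec, Matrix.mulVec_mulVec, h1, Matrix.one_mulVec, Matrix.one_mulVec] at this
    have hAmul : ∀ (a b : G), A (a * b) = A a * A b := by
      intro a b
      show ((((a * b : G) : Matrix.SpecialLinearGroup (Fin 2) ℂ)) : Matrix (Fin 2) (Fin 2) ℂ)
        = _ * _
      rw [Subgroup.coe_mul, Matrix.SpecialLinearGroup.coe_mul]
    have hinj : Function.Injective φ := by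
      intro h h' heq
      have hsplit : A h = A h' * A (h'⁻¹ * h) := by
        rw [← hAmul, mul_inv_cancel_left]
      have : (A h').mulVec ((A (h'⁻¹ * h)).mulVec v) = (A h').mulVec v := by
        rw [Matrix.mulVec_mulVec, ← hsplit]
        exact heq
      have hfix : (A (h'⁻¹ * h)).mulVec v = v := hcancel h' _ _ this
      have := fix_eq_one hG (h'⁻¹ * h) v hv hfix
      rw [inv_mul_eq_one] at this
      exact this.symm
    -- choose a generic c
    have hgood : ∃ c : ℂ, ∀ h h' : G, h ≠ h' →
        φ h 0 + c * φ h 1 ≠ φ h' 0 + c * φ h' 1 := by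
      have hfin : ∀ p : G × G, p.1 ≠ p.2 →
          {c : ℂ | φ p.1 0 + c * φ p.1 1 = φ p.2 0 + c * φ p.2 1}.Finite := by
        intro p hp
        have hφne : φ p.1 ≠ φ p.2 := fun e => hp (hinj e)
        by_cases h1 : φ p.1 1 = φ p.2 1
        · have h0 : φ p.1 0 ≠ φ p.2 0 := by
            intro e
            apply hφne
            funext i
            fin_cases i <;> assumption
          convert Set.finite_empty
          ext c
          simp only [Set.mem_setOf_eq, Set.mem_empty_iff_false, iff_false]
          intro e
          rw [h1] at e
          exact h0 (by linear_combination e)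
        · apply Set.Finite.subset (Set.finite_singleton
            ((φ p.2 0 - φ p.1 0) / (φ p.1 1 - φ p.2 1)))
          intro c hc
          simp only [Set.mem_setOf_eq] at hc
          simp only [Set.mem_singleton_iff]
          rw [eq_div_iff (sub_ne_zero.mpr h1)]
          linear_combination hc
      set B := ⋃ (p : G × G) (_ : p.1 ≠ p.2),
        {c : ℂ | φ p.1 0 + c * φ p.1 1 = φ p.2 0 + c * φ p.2 1} with hBdef
      have hB : B.Finite := by
        apply Set.Finite.biUnion (Set.toFinite {p : G × G | p.1 ≠ p.2})
        intro p hp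
        exact hfin p hp
      obtain ⟨c, hc⟩ := hB.infinite_compl.nonempty
      refine ⟨c, fun h h' hne heq => hc ?_⟩
      rw [hBdef]
      exact Set.mem_iUnion.mpr ⟨(h, h'), Set.mem_iUnion.mpr ⟨hne, heq⟩⟩
    obtain ⟨c, hc⟩ := hgood
    set Fc : Module.End ℂ (S : Type) := f T 0 + c • f T 1 with hFcdef
    have heigF : ∀ h : G, Fc (S.ρ h s) = (φ h 0 + c * φ h 1) • S.ρ h s := by
      intro h
      rw [hFcdef]
      simp only [LinearMap.add_apply, LinearMap.smul_apply]
      rw [heig h 0, heig h 1, smul_smul, ← add_smul]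
    have hρs : ∀ h : G, S.ρ h s ≠ 0 := by
      intro h hz
      apply hs
      have := congrArg (S.ρ h⁻¹) hz
      rwa [← LinearMap.comp_apply, ← Module.End.mul_eq_comp, ← map_mul, inv_mul_cancel,
        map_one, Module.End.one_apply, map_zero] at this
    have hli : LinearIndependent ℂ (fun h : G => S.ρ h s) := by
      apply Module.End.eigenvectors_linearIndependent' Fc (fun h : G => φ h 0 + c * φ h 1)
      · intro h h' e
        by_contra hne
        exact hc h h' hne e
      · intro h
        exact ⟨Module.End.mem_eigenspace_iff.mpr (heigF h), hρs h⟩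
    set t : (S : Type) := ∑ h : G, S.ρ h s with htdef
    have ht : t ≠ 0 := by
      intro h0
      have := Fintype.linearIndependent_iff.mp hli (fun _ => 1) (by simpa [htdef] using h0) 1
      simp at this
    have hinvt : ∀ g : G, S.ρ g t = t := by
      intro g
      rw [htdef, map_sum]
      have e1 : ∀ h : G, S.ρ g (S.ρ h s) = S.ρ (g * h) s := by
        intro h
        rw [← LinearMap.comp_apply, ← Module.End.mul_eq_comp, ← map_mul]
      calc ∑ h : G, S.ρ g (S.ρ h s) = ∑ h : G, S.ρ (g * h) s := by
            exact Finset.sum_congr rfl (fun h _ => e1 h)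
        _ = ∑ h : G, S.ρ h s :=
            Fintype.sum_bijective (g * ·) (Group.mulLeft_bijective g)
              _ _ (fun h => rfl)
    set p : Submodule ℂ (S : Type) := Submodule.span ℂ {t} with hpdef
    have hstab : ∀ (h : G), ∀ m ∈ p, S.ρ h m ∈ p := by
      intro h m hm
      rw [hpdef, Submodule.mem_span_singleton] at hm ⊢
      obtain ⟨a, rfl⟩ := hm
      exact ⟨a, by rw [map_smul, hinvt h]⟩
    have hptop : p = ⊤ := stable_top p hstab
      (fun e => ht (by
        have : t ∈ p := Submodule.mem_span_singleton_self t
        rw [e] at this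
        simpa using this))
    have htriv : ∀ (h : G) (m : S), S.ρ h m = m := by
      intro h m
      have hm : m ∈ p := hptop ▸ Submodule.mem_top
      rw [hpdef, Submodule.mem_span_singleton] at hm
      obtain ⟨a, rfl⟩ := hm
      rw [map_smul, hinvt h]
    have hfixall : ∀ h : G, (A h).mulVec v = v := by
      intro h
      funext i
      have e1 := heig h i
      rw [htriv h s, hfv i] at e1
      exact (smul_left_injective ℂ hs e1.symm)
    have hall1 : ∀ h : G, h = 1 := fun h => fix_eq_one hG h v hv (hfixall h)
    haveI : Unique G := ⟨⟨1⟩, fun a => hall1 a⟩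
    have : Nat.card G = 1 := Nat.card_unique
    omega

end McKayAux


/-- For a finite subgroup `G` of `SL(2, ℂ)` with `|G| ≥ 2`, the natural representation `V`,
and a simple finite-dimensional complex representation `S` of `G`,
`dim Hom_G(S, (V ⊕ 𝟙) ⊗ S) = 1`: in the McKay quiver of `G` embedded into `SL(3, ℂ)` via
`g ↦ diag(g, 1)`, there is exactly one loop at each vertex. -/
theorem mckay_sl2_in_sl3_one_loop
    (G : Subgroup (Matrix.SpecialLinearGroup (Fin 2) ℂ)) [Finite G]
    (hG : 2 ≤ Nat.card G)
    (S : FDRep ℂ G) [Simple S] :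
    finrank ℂ (S ⟶ (SL2.natV G ⊞ 𝟙_ (FDRep ℂ G)) ⊗ S) = 1 := by
  classical
  haveI : PreservesBinaryBiproducts (tensorRight S) :=
    preservesBinaryBiproducts_of_preservesBiproducts _
  have i1 : (SL2.natV G ⊞ 𝟙_ (FDRep ℂ G)) ⊗ S ≅ (SL2.natV G ⊗ S) ⊞ (𝟙_ (FDRep ℂ G) ⊗ S) :=
    (tensorRight S).mapBiprod _ _
  have e1 : finrank ℂ (S ⟶ (SL2.natV G ⊞ 𝟙_ (FDRep ℂ G)) ⊗ S)
      = finrank ℂ (S ⟶ (SL2.natV G ⊗ S) ⊞ (𝟙_ (FDRep ℂ G) ⊗ S)) :=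
    LinearEquiv.finrank_eq (Linear.homCongr ℂ (Iso.refl S) i1)
  have e2 : finrank ℂ (S ⟶ (SL2.natV G ⊗ S) ⊞ (𝟙_ (FDRep ℂ G) ⊗ S))
      = finrank ℂ (S ⟶ SL2.natV G ⊗ S) + finrank ℂ (S ⟶ 𝟙_ (FDRep ℂ G) ⊗ S) := by
    rw [(homBiprodEquiv (SL2.natV G ⊗ S) (𝟙_ (FDRep ℂ G) ⊗ S) S).finrank_eq, finrank_prod]
  haveI : Subsingleton (S ⟶ SL2.natV G ⊗ S) :=
    ⟨fun a b => by rw [McKayAux.hom_eq_zero hG a, McKayAux.hom_eq_zero hG b]⟩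
  have e3 : finrank ℂ (S ⟶ SL2.natV G ⊗ S) = 0 := finrank_zero_of_subsingleton
  have e4 : finrank ℂ (S ⟶ 𝟙_ (FDRep ℂ G) ⊗ S) = 1 := by
    rw [LinearEquiv.finrank_eq (Linear.homCongr ℂ (Iso.refl S) (λ_ S))]
    exact finrank_endomorphism_simple_eq_one ℂ S
  rw [e1, e2, e3, e4]
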